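/- Optimal dual solution from an optimal primal solution: if β* minimizes P over the primal feasible set C, then r* = y − Xβ* maximizes D over ℝⁿ, and D(r*) = P(β*). -/

import Mathlib

open Matrix Finset Classical

noncomputable section
open scoped Classical

/-- The function `h` from the dual of the node relaxation. -/
noncomputable def hfun (lam0 lam2 M x : ℝ) : ℝ :=
  if x ≤ 2 * M * lam2 then x ^ 2 / (4 * lam2) - lam0 else M * x - lam0 - lam2 * M ^ 2

/-- The per-coordinate penalty `ψ_i` of the node relaxation. -/
noncomputable def psi {p : ℕ} (lam0 lam2 M : ℝ) (F0 F1 : Set (Fin p)) (i : Fin p)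
    (t : ℝ) : ℝ :=
  if i ∈ F0 then 0
  else if i ∈ F1 then lam0 + lam2 * t ^ 2
  else if Real.sqrt (lam0 / lam2) ≤ M then
    (if |t| ≤ Real.sqrt (lam0 / lam2) then 2 * Real.sqrt (lam0 * lam2) * |t|
     else lam0 + lam2 * t ^ 2)
  else (lam0 / M + lam2 * M) * |t|

/-- The per-coordinate dual penalty `ν_i`. -/
noncomputable def nufun {p : ℕ} (lam0 lam2 M : ℝ) (F0 F1 : Set (Fin p)) (i : Fin p)
    (x : ℝ) : ℝ :=
  if i ∈ F0 then 0
  else if i ∈ F1 then hfun lam0 lam2 M x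
  else if Real.sqrt (lam0 / lam2) ≤ M then max (hfun lam0 lam2 M x) 0
  else max (M * x - lam0 - lam2 * M ^ 2) 0

/-- The primal feasible set
`C = {β : ‖β‖_∞ ≤ M and β_i = 0 for all i ∈ F0}`. -/
def feasC {p : ℕ} (M : ℝ) (F0 : Set (Fin p)) : Set (Fin p → ℝ) :=
  {β | (∀ i, |β i| ≤ M) ∧ ∀ i ∈ F0, β i = 0}

/-- The primal objective `P(β) = (1/2)‖y − Xβ‖₂² + Σ_i ψ_i(β_i)`. -/
noncomputable def primalP {n p : ℕ} (X : Matrix (Fin n) (Fin p) ℝ) (y : Fin n → ℝ)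
    (lam0 lam2 M : ℝ) (F0 F1 : Set (Fin p)) (β : Fin p → ℝ) : ℝ :=
  (1 / 2) * ∑ j, (y j - ∑ i, X j i * β i) ^ 2 + ∑ i, psi lam0 lam2 M F0 F1 i (β i)

/-- The dual objective `D(r) = −(1/2)‖r‖₂² + ⟨y, r⟩ − Σ_i ν_i(|X_iᵀ r|)`. -/
noncomputable def dualD {n p : ℕ} (X : Matrix (Fin n) (Fin p) ℝ) (y : Fin n → ℝ)
    (lam0 lam2 M : ℝ) (F0 F1 : Set (Fin p)) (r : Fin n → ℝ) : ℝ :=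
  -(1 / 2) * ∑ j, r j ^ 2 + ∑ j, y j * r j
    - ∑ i, nufun lam0 lam2 M F0 F1 i |∑ j, X j i * r j|

lemma hfun_FY {lam0 lam2 M : ℝ} (hlam2 : 0 < lam2) {t x : ℝ} (ht0 : 0 ≤ t) (htM : t ≤ M) :
    t * x - (lam0 + lam2 * t ^ 2) ≤ hfun lam0 lam2 M x := by
  unfold hfun; split_ifs with h
  · have h4 : x ^ 2 / (4 * lam2) * (4 * lam2) = x ^ 2 := by field_simp
    nlinarith [sq_nonneg (2 * lam2 * t - x), h4]
  · push_neg at h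
    nlinarith [mul_nonneg (sub_nonneg.2 htM) (by nlinarith : (0:ℝ) ≤ x - lam2 * (M + t))]

lemma sqrt_sq' {lam0 lam2 : ℝ} (hlam0 : 0 ≤ lam0) (hlam2 : 0 < lam2) :
    lam2 * (Real.sqrt (lam0 / lam2)) ^ 2 = lam0 := by
  rw [Real.sq_sqrt (div_nonneg hlam0 hlam2.le)]; field_simp

lemma sqrt_mul' {lam0 lam2 : ℝ} (hlam0 : 0 ≤ lam0) (hlam2 : 0 < lam2) :
    Real.sqrt (lam0 * lam2) = lam2 * Real.sqrt (lam0 / lam2) := by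
  rw [show lam0 * lam2 = (lam2 * Real.sqrt (lam0 / lam2)) ^ 2 by
    nlinarith [sqrt_sq' hlam0 hlam2]]
  exact Real.sqrt_sq (by positivity)

lemma psi_abs {p : ℕ} (lam0 lam2 M : ℝ) (F0 F1 : Set (Fin p)) (i : Fin p) (t : ℝ) :
    psi lam0 lam2 M F0 F1 i |t| = psi lam0 lam2 M F0 F1 i t := by
  unfold psi; simp [abs_abs, sq_abs]

lemma psi_nu_FY {p : ℕ} {lam0 lam2 M : ℝ} (hlam0 : 0 ≤ lam0) (hlam2 : 0 < lam2) (hM : 0 < M)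
    {F0 F1 : Set (Fin p)} (i : Fin p) {t x : ℝ} (ht0 : 0 ≤ t) (htM : t ≤ M) (hx : 0 ≤ x)
    (hF0 : i ∈ F0 → t = 0) :
    t * x ≤ psi lam0 lam2 M F0 F1 i t + nufun lam0 lam2 M F0 F1 i x := by
  have hs0 : 0 ≤ Real.sqrt (lam0 / lam2) := Real.sqrt_nonneg _
  have hs2 := sqrt_sq' hlam0 hlam2
  have hsm := sqrt_mul' hlam0 hlam2
  set s := Real.sqrt (lam0 / lam2) with hs
  unfold psi nufun
  by_cases hi0 : i ∈ F0
  · simp [hi0, hF0 hi0]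
  by_cases hi1 : i ∈ F1
  · simp only [hi0, hi1, if_false, if_true]
    have := hfun_FY (lam0 := lam0) hlam2 ht0 htM (x := x)
    linarith
  by_cases hsM : s ≤ M
  · simp only [hi0, hi1, ← hs, hsM, if_false, if_true, abs_of_nonneg ht0]
    split_ifs with hts
    · by_cases hx2 : x ≤ 2 * Real.sqrt (lam0 * lam2)
      · have h1 : t * x ≤ 2 * Real.sqrt (lam0 * lam2) * t := by nlinarith
        have h2 : (0:ℝ) ≤ max (hfun lam0 lam2 M x) 0 := le_max_right _ _
        linarith
      · push_neg at hx2
        have h1 : s * x - (lam0 + lam2 * s ^ 2) ≤ hfun lam0 lam2 M x :=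
          hfun_FY hlam2 hs0 hsM
        have h2 : hfun lam0 lam2 M x ≤ max (hfun lam0 lam2 M x) 0 := le_max_left _ _
        have h3 : 0 ≤ (s - t) * (x - 2 * lam2 * s) := by nlinarith
        nlinarith
    · have h1 := hfun_FY (lam0 := lam0) hlam2 ht0 htM (x := x)
      have h2 : hfun lam0 lam2 M x ≤ max (hfun lam0 lam2 M x) 0 := le_max_left _ _
      linarith
  · simp only [hi0, hi1, ← hs, hsM, if_false, abs_of_nonneg ht0]
    have hcM : (lam0 / M + lam2 * M) * M = lam0 + lam2 * M ^ 2 := by field_simp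
    by_cases hxc : x ≤ lam0 / M + lam2 * M
    · have h1 : t * x ≤ (lam0 / M + lam2 * M) * t := by nlinarith
      have h2 : (0:ℝ) ≤ max (M * x - lam0 - lam2 * M ^ 2) 0 := le_max_right _ _
      linarith
    · push_neg at hxc
      have h2 : M * x - lam0 - lam2 * M ^ 2 ≤ max (M * x - lam0 - lam2 * M ^ 2) 0 :=
        le_max_left _ _
      have h3 : 0 ≤ (M - t) * (x - (lam0 / M + lam2 * M)) := by nlinarith
      nlinarith

lemma nu_attained {p : ℕ} {lam0 lam2 M : ℝ} (hlam0 : 0 ≤ lam0) (hlam2 : 0 < lam2) (hM : 0 < M)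
    {F0 F1 : Set (Fin p)} (i : Fin p) (hi0 : i ∉ F0) {x : ℝ} (hx : 0 ≤ x) :
    ∃ τ : ℝ, 0 ≤ τ ∧ τ ≤ M ∧
      nufun lam0 lam2 M F0 F1 i x = τ * x - psi lam0 lam2 M F0 F1 i τ := by
  have hs0 : 0 ≤ Real.sqrt (lam0 / lam2) := Real.sqrt_nonneg _
  have hs2 := sqrt_sq' hlam0 hlam2
  have hsm := sqrt_mul' hlam0 hlam2
  set s := Real.sqrt (lam0 / lam2) with hs
  by_cases hi1 : i ∈ F1
  · by_cases hxM : x ≤ 2 * M * lam2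
    · refine ⟨x / (2 * lam2), by positivity, by rw [div_le_iff₀ (by positivity)]; linarith, ?_⟩
      unfold nufun hfun psi
      simp only [hi0, hi1, hxM, if_false, if_true]
      field_simp; ring
    · refine ⟨M, hM.le, le_rfl, ?_⟩
      unfold nufun hfun psi
      simp only [hi0, hi1, hxM, if_false, if_true]
      ring
  · by_cases hsM : s ≤ M
    · -- mixed case
      have hpsiM : psi lam0 lam2 M F0 F1 i M = lam0 + lam2 * M ^ 2 := by
        unfold psi
        simp only [hi0, hi1, ← hs, hsM, if_false, if_true]
        rw [abs_of_nonneg hM.le]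
        split_ifs with h
        · have hMs : M = s := le_antisymm h hsM
          have h5 : lam2 * M ^ 2 = lam0 := by rw [hMs]; exact hs2
          rw [hsm, ← hMs]; linear_combination h5
        · rfl
      by_cases hx2 : x ≤ 2 * lam2 * s
      · refine ⟨0, le_rfl, hM.le, ?_⟩
        unfold nufun psi
        simp only [hi0, hi1, ← hs, hsM, if_false, if_true, abs_zero, hs0, if_true]
        have hh : hfun lam0 lam2 M x ≤ 0 := by
          unfold hfun
          have hxM : x ≤ 2 * M * lam2 := by nlinarith
          rw [if_pos hxM]
          have h4 : x ^ 2 / (4 * lam2) * (4 * lam2) = x ^ 2 := by field_simp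
          nlinarith
        simp [max_eq_right hh]
      · push_neg at hx2
        by_cases hxM : x ≤ 2 * M * lam2
        · refine ⟨x / (2 * lam2), by positivity,
            by rw [div_le_iff₀ (by positivity)]; linarith, ?_⟩
          have hts : ¬ (|x / (2 * lam2)| ≤ s) := by
            rw [abs_of_nonneg (by positivity), not_le, lt_div_iff₀ (by positivity)]
            nlinarith
          unfold nufun hfun psi
          simp only [hi0, hi1, ← hs, hsM, hxM, hts, if_false, if_true]
          have hh0 : (0:ℝ) ≤ x ^ 2 / (4 * lam2) - lam0 := by
            have h4 : x ^ 2 / (4 * lam2) * (4 * lam2) = x ^ 2 := by field_simp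
            have h5 : (2 * lam2 * s) * (2 * lam2 * s) ≤ x * x :=
              mul_self_le_mul_self (by positivity) hx2.le
            nlinarith
          rw [max_eq_left hh0]
          field_simp; ring
        · refine ⟨M, hM.le, le_rfl, ?_⟩
          rw [hpsiM]
          unfold nufun hfun
          simp only [hi0, hi1, ← hs, hsM, hxM, if_false, if_true]
          have hh0 : (0:ℝ) ≤ M * x - lam0 - lam2 * M ^ 2 := by push_neg at hxM; nlinarith
          rw [max_eq_left hh0]; ring
    · -- linear case
      have hcM : (lam0 / M + lam2 * M) * M = lam0 + lam2 * M ^ 2 := by field_simp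
      by_cases hxc : x ≤ lam0 / M + lam2 * M
      · refine ⟨0, le_rfl, hM.le, ?_⟩
        unfold nufun psi
        simp only [hi0, hi1, ← hs, hsM, if_false, abs_zero]
        have hh : M * x - lam0 - lam2 * M ^ 2 ≤ 0 := by nlinarith
        simp [max_eq_right hh]
      · refine ⟨M, hM.le, le_rfl, ?_⟩
        unfold nufun psi
        simp only [hi0, hi1, ← hs, hsM, if_false, abs_of_nonneg hM.le]
        push_neg at hxc
        have hh0 : (0:ℝ) ≤ M * x - lam0 - lam2 * M ^ 2 := by nlinarith
        rw [max_eq_left hh0]; field_simp; ring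

lemma psi_convex {p : ℕ} {lam0 lam2 M : ℝ} (hlam0 : 0 ≤ lam0) (hlam2 : 0 < lam2) (hM : 0 < M)
    {F0 F1 : Set (Fin p)} (i : Fin p) {u v θ : ℝ} (hθ0 : 0 ≤ θ) (hθ1 : θ ≤ 1) :
    psi lam0 lam2 M F0 F1 i ((1 - θ) * u + θ * v)
      ≤ (1 - θ) * psi lam0 lam2 M F0 F1 i u + θ * psi lam0 lam2 M F0 F1 i v := by
  have hs0 : 0 ≤ Real.sqrt (lam0 / lam2) := Real.sqrt_nonneg _
  have hs2 := sqrt_sq' hlam0 hlam2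
  have hsm := sqrt_mul' hlam0 hlam2
  set s := Real.sqrt (lam0 / lam2) with hs
  have habs : |(1 - θ) * u + θ * v| ≤ (1 - θ) * |u| + θ * |v| := by
    calc |(1 - θ) * u + θ * v| ≤ |(1 - θ) * u| + |θ * v| := abs_add_le _ _
    _ = (1 - θ) * |u| + θ * |v| := by
        rw [abs_mul, abs_mul, abs_of_nonneg hθ0, abs_of_nonneg (by linarith : (0:ℝ) ≤ 1 - θ)]
  by_cases hi0 : i ∈ F0
  · unfold psi; simp [hi0]
  by_cases hi1 : i ∈ F1
  · unfold psi; simp only [hi0, hi1, if_false, if_true]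
    nlinarith [sq_nonneg (u - v), mul_nonneg hθ0 (by linarith : (0:ℝ) ≤ 1 - θ),
      mul_nonneg (mul_nonneg hθ0 (by linarith : (0:ℝ) ≤ 1 - θ)) (sq_nonneg (u - v))]
  by_cases hsM : s ≤ M
  · -- mixed case: use supporting function A w t = 2 lam2 w |t| + lam0 - lam2 w^2
    set m := (1 - θ) * u + θ * v with hm
    set w := max s |m| with hw
    have hws : s ≤ w := le_max_left _ _
    have hw0 : 0 ≤ w := le_trans hs0 hws
    -- ψ(m) = A w m
    have hAm : psi lam0 lam2 M F0 F1 i m = 2 * lam2 * w * |m| + lam0 - lam2 * w ^ 2 := by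
      unfold psi
      simp only [hi0, hi1, ← hs, hsM, if_false, if_true]
      by_cases hms : |m| ≤ s
      · rw [if_pos hms]
        have : w = s := max_eq_left hms
        rw [this, hsm]; linear_combination hs2
      · rw [if_neg hms]
        have : w = |m| := max_eq_right (le_of_not_ge hms)
        rw [this]; rw [← sq_abs m]; ring
    -- ψ(t) ≥ A w t for all t
    have hAle : ∀ t : ℝ, 2 * lam2 * w * |t| + lam0 - lam2 * w ^ 2
        ≤ psi lam0 lam2 M F0 F1 i t := by
      intro t
      unfold psi
      simp only [hi0, hi1, ← hs, hsM, if_false, if_true]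
      split_ifs with hts
      · nlinarith [mul_nonneg (sub_nonneg.2 hws) (by nlinarith [abs_nonneg t] :
          (0:ℝ) ≤ w + s - 2 * |t|), hsm]
      · push_neg at hts
        have := sq_abs t
        nlinarith [sq_nonneg (|t| - w)]
    have h1 := hAle u
    have h2 := hAle v
    rw [hAm]
    nlinarith [mul_le_mul_of_nonneg_left habs (by positivity : (0:ℝ) ≤ 2 * lam2 * w)]
  · unfold psi
    simp only [hi0, hi1, ← hs, hsM, if_false]
    have hc0 : 0 ≤ lam0 / M + lam2 * M := by positivity
    nlinarith [mul_le_mul_of_nonneg_left habs hc0]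

lemma cross_sum {n p : ℕ} (X : Matrix (Fin n) (Fin p) ℝ) (β : Fin p → ℝ) (r : Fin n → ℝ) :
    ∑ j, r j * (∑ i, X j i * β i) = ∑ i, β i * (∑ j, X j i * r j) := by
  simp_rw [Finset.mul_sum]
  rw [Finset.sum_comm]
  exact Finset.sum_congr rfl fun i _ => Finset.sum_congr rfl fun j _ => by ring

lemma sum_update_eq {p : ℕ} (f : Fin p → ℝ → ℝ) (β : Fin p → ℝ) (i : Fin p) (t : ℝ) :
    ∑ k, f k (Function.update β i t k) = ∑ k, f k (β k) + (f i t - f i (β i)) := by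
  have h : ∑ k, (f k (Function.update β i t k) - f k (β k)) = f i t - f i (β i) := by
    rw [Finset.sum_eq_single i]
    · simp
    · intro k _ hk; rw [Function.update_of_ne hk]; ring
    · intro h; exact absurd (Finset.mem_univ i) h
  have h2 : ∑ k, (f k (Function.update β i t k) - f k (β k)) =
      ∑ k, f k (Function.update β i t k) - ∑ k, f k (β k) := Finset.sum_sub_distrib _ _
  linarith

lemma PD_identity {n p : ℕ} (X : Matrix (Fin n) (Fin p) ℝ) (y : Fin n → ℝ)
    (lam0 lam2 M : ℝ) (F0 F1 : Set (Fin p)) (β : Fin p → ℝ) (r : Fin n → ℝ) :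
    primalP X y lam0 lam2 M F0 F1 β - dualD X y lam0 lam2 M F0 F1 r
      = (1/2) * ∑ j, ((y j - ∑ i, X j i * β i) - r j)^2
        + ∑ i, (psi lam0 lam2 M F0 F1 i (β i)
            + nufun lam0 lam2 M F0 F1 i |∑ j, X j i * r j|
            - β i * (∑ j, X j i * r j)) := by
  unfold primalP dualD
  have e1 : ∑ j, ((y j - ∑ i, X j i * β i) - r j)^2
      = ∑ j, ((y j - ∑ i, X j i * β i)^2 + (r j)^2 - 2*(y j * r j)
          + 2*(r j * ∑ i, X j i * β i)) :=
    Finset.sum_congr rfl fun j _ => by ring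
  rw [e1]
  simp only [Finset.sum_add_distrib, Finset.sum_sub_distrib, ← Finset.mul_sum,
    cross_sum X β r]
  ring

lemma slope_le {K d : ℝ} (hK : 0 ≤ K) (h : ∀ θ : ℝ, 0 < θ → θ ≤ 1 → θ * d ≤ K * θ^2) :
    d ≤ 0 := by
  by_contra hd
  push_neg at hd
  rcases eq_or_lt_of_le hK with hK0 | hKpos
  · have := h 1 one_pos le_rfl; nlinarith
  · have hθ0 : 0 < min 1 (d / (2*K)) := lt_min one_pos (by positivity)
    have h1 := h _ hθ0 (min_le_left _ _)
    have h2 : min 1 (d/(2*K)) ≤ d/(2*K) := min_le_right _ _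
    have h4 : K * (d/(2*K)) = d/2 := by field_simp
    nlinarith [mul_le_mul_of_nonneg_left h2 (mul_pos hKpos hθ0).le, mul_pos hθ0 hd]

lemma coord_opt {n p : ℕ} (X : Matrix (Fin n) (Fin p) ℝ) (y : Fin n → ℝ)
    (lam0 lam2 M : ℝ) (F0 F1 : Set (Fin p)) (βstar : Fin p → ℝ)
    (hfeas : βstar ∈ feasC M F0)
    (hmin : ∀ β ∈ feasC M F0,
      primalP X y lam0 lam2 M F0 F1 βstar ≤ primalP X y lam0 lam2 M F0 F1 β)
    (i : Fin p) (hi0 : i ∉ F0) (t : ℝ) (ht : |t| ≤ M) :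
    psi lam0 lam2 M F0 F1 i (βstar i)
      ≤ -((t - βstar i) * (∑ j, X j i * (y j - ∑ k, X j k * βstar k)))
        + (1/2) * (t - βstar i)^2 * (∑ j, (X j i)^2) + psi lam0 lam2 M F0 F1 i t := by
  set β' := Function.update βstar i t with hβ'def
  have hβ' : β' ∈ feasC M F0 := by
    constructor
    · intro k
      by_cases hk : k = i
      · subst hk; simpa [hβ'def] using ht
      · rw [hβ'def, Function.update_of_ne hk]; exact hfeas.1 k
    · intro k hk
      have hki : k ≠ i := fun h => hi0 (h ▸ hk)
      rw [hβ'def, Function.update_of_ne hki]; exact hfeas.2 k hk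
  have h := hmin β' hβ'
  unfold primalP at h
  set c := t - βstar i with hc
  have hsum : ∀ j, ∑ k, X j k * β' k = (∑ k, X j k * βstar k) + X j i * c := by
    intro j
    have := sum_update_eq (fun k z => X j k * z) βstar i t
    rw [hβ'def, this]; ring
  have hψ : ∑ k, psi lam0 lam2 M F0 F1 k (β' k)
      = ∑ k, psi lam0 lam2 M F0 F1 k (βstar k)
        + (psi lam0 lam2 M F0 F1 i t - psi lam0 lam2 M F0 F1 i (βstar i)) := by
    rw [hβ'def]; exact sum_update_eq (fun k z => psi lam0 lam2 M F0 F1 k z) βstar i t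
  have e2 : ∑ j, (y j - ∑ k, X j k * β' k)^2
      = ∑ j, (y j - ∑ k, X j k * βstar k)^2
        - 2*c*(∑ j, X j i * (y j - ∑ k, X j k * βstar k)) + c^2 * ∑ j, (X j i)^2 := by
    have e3 : ∀ j, (y j - ∑ k, X j k * β' k)^2
        = (y j - ∑ k, X j k * βstar k)^2
          - 2*(c*(X j i * (y j - ∑ k, X j k * βstar k))) + c^2 * (X j i)^2 := by
      intro j; rw [hsum j]; ring
    rw [Finset.sum_congr rfl fun j _ => e3 j]
    simp only [Finset.sum_add_distrib, Finset.sum_sub_distrib, ← Finset.mul_sum]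
    ring
  rw [e2, hψ] at h
  linarith

/-- Optimal dual solution from an optimal primal solution: if `β*` minimizes `P` over
the primal feasible set `C`, then `r* = y − Xβ*` maximizes `D` over `ℝⁿ`, and
`D(r*) = P(β*)`. -/
theorem optimal_dual_from_optimal_primal {n p : ℕ} (X : Matrix (Fin n) (Fin p) ℝ)
    (y : Fin n → ℝ) (lam0 lam2 M : ℝ) (hlam0 : 0 ≤ lam0) (hlam2 : 0 < lam2) (hM : 0 < M)
    (F0 F1 : Set (Fin p)) (hdisj : Disjoint F0 F1)
    (βstar : Fin p → ℝ) (hfeas : βstar ∈ feasC M F0)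
    (hmin : ∀ β ∈ feasC M F0,
      primalP X y lam0 lam2 M F0 F1 βstar ≤ primalP X y lam0 lam2 M F0 F1 β) :
    (∀ r : Fin n → ℝ,
      dualD X y lam0 lam2 M F0 F1 r
        ≤ dualD X y lam0 lam2 M F0 F1 (fun j => y j - ∑ i, X j i * βstar i)) ∧
    dualD X y lam0 lam2 M F0 F1 (fun j => y j - ∑ i, X j i * βstar i)
      = primalP X y lam0 lam2 M F0 F1 βstar := by
  -- weak duality
  have weak : ∀ r : Fin n → ℝ, ∀ β ∈ feasC M F0,
      dualD X y lam0 lam2 M F0 F1 r ≤ primalP X y lam0 lam2 M F0 F1 β := by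
    intro r β hβ
    have hid := PD_identity X y lam0 lam2 M F0 F1 β r
    have hsq : (0:ℝ) ≤ ∑ j, ((y j - ∑ i, X j i * β i) - r j)^2 :=
      Finset.sum_nonneg fun j _ => sq_nonneg _
    have hterm : (0:ℝ) ≤ ∑ i, (psi lam0 lam2 M F0 F1 i (β i)
        + nufun lam0 lam2 M F0 F1 i |∑ j, X j i * r j|
        - β i * (∑ j, X j i * r j)) := by
      apply Finset.sum_nonneg
      intro i _
      have habs : β i * (∑ j, X j i * r j) ≤ |β i| * |∑ j, X j i * r j| := by
        calc β i * (∑ j, X j i * r j) ≤ |β i * (∑ j, X j i * r j)| := le_abs_self _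
        _ = |β i| * |∑ j, X j i * r j| := abs_mul _ _
      have hkey := psi_nu_FY hlam0 hlam2 hM (F1 := F1) i (abs_nonneg (β i)) (hβ.1 i)
        (abs_nonneg (∑ j, X j i * r j)) (fun h => by rw [hβ.2 i h, abs_zero])
      rw [psi_abs] at hkey
      linarith
    linarith
  set r₀ : Fin n → ℝ := fun j => y j - ∑ i, X j i * βstar i with hr₀
  -- per-coordinate equality at the optimum
  have eqterm : ∀ i, psi lam0 lam2 M F0 F1 i (βstar i)
      + nufun lam0 lam2 M F0 F1 i |∑ j, X j i * r₀ j|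
      - βstar i * (∑ j, X j i * r₀ j) = 0 := by
    intro i
    by_cases hi0 : i ∈ F0
    · have hb : βstar i = 0 := hfeas.2 i hi0
      unfold psi nufun; simp [hi0, hb]
    · set xi := ∑ j, X j i * r₀ j with hxi
      set b := βstar i with hb
      have hge : b * xi ≤ psi lam0 lam2 M F0 F1 i b + nufun lam0 lam2 M F0 F1 i |xi| := by
        have habs : b * xi ≤ |b| * |xi| := by
          calc b * xi ≤ |b * xi| := le_abs_self _
          _ = |b| * |xi| := abs_mul _ _
        have hkey := psi_nu_FY hlam0 hlam2 hM (F1 := F1) i (abs_nonneg b) (hfeas.1 i)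
          (abs_nonneg xi) (fun h => absurd h hi0)
        rw [psi_abs] at hkey
        linarith
      obtain ⟨τ, hτ0, hτM, hτeq⟩ := nu_attained hlam0 hlam2 hM (F1 := F1) i hi0
        (abs_nonneg xi)
      set tstar := if 0 ≤ xi then τ else -τ with hts
      have htsabs : |tstar| = τ := by
        rw [hts]; split_ifs with h
        · exact abs_of_nonneg hτ0
        · rw [abs_neg]; exact abs_of_nonneg hτ0
      have htsM : |tstar| ≤ M := htsabs ▸ hτM
      have hts_x : tstar * xi = τ * |xi| := by
        rw [hts]; split_ifs with h
        · rw [abs_of_nonneg h]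
        · push_neg at h; rw [abs_of_neg h]; ring
      have hψts : psi lam0 lam2 M F0 F1 i tstar = psi lam0 lam2 M F0 F1 i τ := by
        rw [← psi_abs lam0 lam2 M F0 F1 i tstar, htsabs]
      set a := ∑ j, (X j i)^2 with ha
      have ha0 : (0:ℝ) ≤ a := Finset.sum_nonneg fun j _ => sq_nonneg _
      have hbM : |b| ≤ M := hfeas.1 i
      have hd : (tstar - b) * xi - (psi lam0 lam2 M F0 F1 i tstar
          - psi lam0 lam2 M F0 F1 i b) ≤ 0 := by
        apply slope_le (K := (1/2) * a * (tstar - b)^2) (by positivity)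
        intro θ hθ0 hθ1
        have hmidM : |(1-θ)*b + θ*tstar| ≤ M := by
          calc |(1-θ)*b + θ*tstar| ≤ |(1-θ)*b| + |θ*tstar| := abs_add_le _ _
          _ = (1-θ)*|b| + θ*|tstar| := by
              rw [abs_mul, abs_mul, abs_of_nonneg hθ0.le,
                abs_of_nonneg (by linarith : (0:ℝ) ≤ 1-θ)]
          _ ≤ (1-θ)*M + θ*M := by
              apply add_le_add
              · exact mul_le_mul_of_nonneg_left hbM (by linarith)
              · exact mul_le_mul_of_nonneg_left htsM hθ0.le
          _ = M := by ring
        have hpt := coord_opt X y lam0 lam2 M F0 F1 βstar hfeas hmin i hi0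
          ((1-θ)*b + θ*tstar) hmidM
        have hcvx := psi_convex hlam0 hlam2 hM (F0 := F0) (F1 := F1) i
          (u := b) (v := tstar) hθ0.le hθ1
        have hxieq : (∑ j, X j i * (y j - ∑ k, X j k * βstar k)) = xi := by
          rw [hxi, hr₀]
        rw [hxieq, ← hb] at hpt
        nlinarith [hpt, hcvx]
      have hle : nufun lam0 lam2 M F0 F1 i |xi|
          ≤ b * xi - psi lam0 lam2 M F0 F1 i b := by
        rw [hτeq, ← hts_x, ← hψts]; linarith
      linarith
  -- strong duality equality
  have hPD := PD_identity X y lam0 lam2 M F0 F1 βstar r₀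
  have hzero1 : ∑ j, ((y j - ∑ i, X j i * βstar i) - r₀ j)^2 = 0 :=
    Finset.sum_eq_zero fun j _ => by rw [hr₀]; ring
  have hzero2 : ∑ i, (psi lam0 lam2 M F0 F1 i (βstar i)
      + nufun lam0 lam2 M F0 F1 i |∑ j, X j i * r₀ j|
      - βstar i * (∑ j, X j i * r₀ j)) = 0 :=
    Finset.sum_eq_zero fun i _ => eqterm i
  rw [hzero1, hzero2] at hPD
  have heq : dualD X y lam0 lam2 M F0 F1 r₀ = primalP X y lam0 lam2 M F0 F1 βstar := by
    linarith
  exact ⟨fun r => heq ▸ weak r βstar hfeas, heq⟩
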